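/- Let A, B, C be d×d complex matrices with d ≥ 2. Then the following are equivalent: (1) C = A + B and A·B = B·A; (2) exp(t·A)·exp(t·B) = exp(t·C) for all real t; (3) there exists ε > 0 such that exp(t·A)·exp(t·B) = exp(t·C) for all t with 0 ≤ t < ε. -/

import Mathlib

open NormedSpace

/-- If two differentiable functions agree on `[0, ε)`, so do their derivatives. -/
lemma deriv_eqOn_Ico {E : Type*} [NormedAddCommGroup E] [NormedSpace ℝ E]
    {f g : ℝ → E} {ε : ℝ} (hε : 0 < ε)
    (hf : Differentiable ℝ f) (hg : Differentiable ℝ g)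
    (h : ∀ t : ℝ, 0 ≤ t → t < ε → f t = g t) :
    ∀ t : ℝ, 0 ≤ t → t < ε → deriv f t = deriv g t := by
  intro t ht htε
  rcases eq_or_lt_of_le ht with rfl | htpos
  · -- at 0, use derivatives within `Ici 0`
    have hmem : Set.Ico (0:ℝ) ε ∈ nhdsWithin (0:ℝ) (Set.Ici 0) := by
      rw [mem_nhdsWithin]
      exact ⟨Set.Iio ε, isOpen_Iio, hε, by
        rintro x ⟨hx1, hx2⟩; exact ⟨hx2, hx1⟩⟩
    have heq : f =ᶠ[nhdsWithin (0:ℝ) (Set.Ici 0)] g := by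
      filter_upwards [hmem] with x hx
      exact h x hx.1 hx.2
    have hu : UniqueDiffWithinAt ℝ (Set.Ici (0:ℝ)) 0 :=
      uniqueDiffOn_Ici 0 0 Set.self_mem_Ici
    calc deriv f 0 = derivWithin f (Set.Ici 0) 0 := ((hf 0).derivWithin hu).symm
      _ = derivWithin g (Set.Ici 0) 0 := heq.derivWithin_eq (h 0 le_rfl hε)
      _ = deriv g 0 := (hg 0).derivWithin hu
  · have heq : f =ᶠ[nhds t] g := by
      have : Set.Ioo (0:ℝ) ε ∈ nhds t := Ioo_mem_nhds htpos htε
      filter_upwards [this] with x hx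
      exact h x hx.1.le hx.2
    exact heq.deriv_eq

/-- The hard direction, for a general complete normed `ℝ`-algebra. -/
lemma key_of_eq_on_Ico {E : Type*} [NormedRing E] [NormedAlgebra ℝ E] [CompleteSpace E]
    (A B C : E) {ε : ℝ} (hε : 0 < ε)
    (h : ∀ t : ℝ, 0 ≤ t → t < ε → exp (t • A) * exp (t • B) = exp (t • C)) :
    C = A + B ∧ A * B = B * A := by
  set f : ℝ → E := fun t => exp (t • A) * exp (t • B) with hfdef
  set g : ℝ → E := fun t => exp (t • C) with hgdef
  set f1 : ℝ → E := fun t =>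
    exp (t • A) * A * exp (t • B) + exp (t • A) * (exp (t • B) * B) with hf1def
  set g1 : ℝ → E := fun t => exp (t • C) * C with hg1def
  set f2 : ℝ → E := fun t =>
    (exp (t • A) * A * A * exp (t • B) + exp (t • A) * A * (exp (t • B) * B)) +
    (exp (t • A) * A * (exp (t • B) * B) + exp (t • A) * (exp (t • B) * B * B))
    with hf2def
  set g2 : ℝ → E := fun t => exp (t • C) * C * C with hg2def
  have hf : ∀ t, HasDerivAt f (f1 t) t := fun t =>
    (hasDerivAt_exp_smul_const A t).mul (hasDerivAt_exp_smul_const B t)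
  have hg : ∀ t, HasDerivAt g (g1 t) t := fun t => hasDerivAt_exp_smul_const C t
  have hf1 : ∀ t, HasDerivAt f1 (f2 t) t := fun t =>
    ((((hasDerivAt_exp_smul_const A t).mul_const A).mul
        (hasDerivAt_exp_smul_const B t))).add
      ((hasDerivAt_exp_smul_const A t).mul
        ((hasDerivAt_exp_smul_const B t).mul_const B))
  have hg1 : ∀ t, HasDerivAt g1 (g2 t) t := fun t =>
    (hasDerivAt_exp_smul_const C t).mul_const C
  have hdf : Differentiable ℝ f := fun t => (hf t).differentiableAt
  have hdg : Differentiable ℝ g := fun t => (hg t).differentiableAt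
  have hderiv_f : deriv f = f1 := funext fun t => (hf t).deriv
  have hderiv_g : deriv g = g1 := funext fun t => (hg t).deriv
  have step1 : ∀ t : ℝ, 0 ≤ t → t < ε → f1 t = g1 t := by
    intro t ht htε
    rw [← hderiv_f, ← hderiv_g]
    exact deriv_eqOn_Ico hε hdf hdg h t ht htε
  have hdf1 : Differentiable ℝ f1 := fun t => (hf1 t).differentiableAt
  have hdg1 : Differentiable ℝ g1 := fun t => (hg1 t).differentiableAt
  have hderiv_f1 : deriv f1 = f2 := funext fun t => (hf1 t).deriv
  have hderiv_g1 : deriv g1 = g2 := funext fun t => (hg1 t).deriv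
  have step2 : f2 0 = g2 0 := by
    rw [← hderiv_f1, ← hderiv_g1]
    exact deriv_eqOn_Ico hε hdf1 hdg1 step1 0 le_rfl hε
  have h1 : A + B = C := by
    have := step1 0 le_rfl hε
    simpa [hf1def, hg1def, zero_smul, exp_zero] using this
  have h2 : A * A + A * B + (A * B + B * B) = C * C := by
    have := step2
    simpa [hf2def, hg2def, zero_smul, exp_zero] using this
  refine ⟨h1.symm, ?_⟩
  rw [← h1] at h2
  have h3 : A * A + A * B + (A * B + B * B) = A * A + A * B + (B * A + B * B) := by
    rw [h2, add_mul, mul_add, mul_add]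
  have h4 := add_left_cancel h3
  exact add_right_cancel h4

theorem exp_mul_exp_eq_exp_iff (d : ℕ) (hd : 2 ≤ d)
    (A B C : Matrix (Fin d) (Fin d) ℂ) :
    ((C = A + B ∧ A * B = B * A) ↔
      (∀ t : ℝ, NormedSpace.exp (t • A) * NormedSpace.exp (t • B) =
        NormedSpace.exp (t • C))) ∧
    ((C = A + B ∧ A * B = B * A) ↔
      (∃ ε : ℝ, 0 < ε ∧ ∀ t : ℝ, 0 ≤ t → t < ε →
        NormedSpace.exp (t • A) * NormedSpace.exp (t • B) =
          NormedSpace.exp (t • C))) := by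
  letI : SeminormedRing (Matrix (Fin d) (Fin d) ℂ) := Matrix.linftyOpSemiNormedRing
  letI : NormedRing (Matrix (Fin d) (Fin d) ℂ) := Matrix.linftyOpNormedRing
  letI : NormedAlgebra ℝ (Matrix (Fin d) (Fin d) ℂ) := Matrix.linftyOpNormedAlgebra
  letI : NormedAlgebra ℂ (Matrix (Fin d) (Fin d) ℂ) := Matrix.linftyOpNormedAlgebra
  have hexp : (exp : Matrix (Fin d) (Fin d) ℂ → Matrix (Fin d) (Fin d) ℂ) = exp :=
    rfl
  have hfwd : (C = A + B ∧ A * B = B * A) →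
      ∀ t : ℝ, exp (t • A) * exp (t • B) = exp (t • C) := by
    rintro ⟨rfl, hcomm⟩ t
    have hc : Commute A B := hcomm
    letI : NormedAlgebra ℚ (Matrix (Fin d) (Fin d) ℂ) := Matrix.linftyOpNormedAlgebra
    rw [smul_add]
    exact (exp_add_of_commute ((hc.smul_left t).smul_right t)).symm
  have hbwd : (∃ ε : ℝ, 0 < ε ∧ ∀ t : ℝ, 0 ≤ t → t < ε →
      exp (t • A) * exp (t • B) = exp (t • C)) →
      (C = A + B ∧ A * B = B * A) := by
    rintro ⟨ε, hε, h⟩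
    refine key_of_eq_on_Ico A B C hε ?_
    intro t ht htε
    exact h t ht htε
  exact ⟨⟨fun h t => hfwd h t, fun h => hbwd ⟨1, one_pos, fun t _ _ => h t⟩⟩,
    ⟨fun h => ⟨1, one_pos, fun t _ _ => hfwd h t⟩, hbwd⟩⟩
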